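/- Let (C, •, ∘, ζ) be an (M,N)-biactegory, for monoidal categories (M, j, ⊗) and (N, i, ⊘). Then the functor (N^rev × M) × C ⥤ C given by ((n,m), c) ↦ (m • c) ∘ n, equipped with the unitor η^•_c ≫ η^∘_{j • c} : c ⟶ (j • c) ∘ i and the multiplicator (ζ_{m, m'•c, n'} ∘ 𝟙_n) ≫ ((μ^•_{m,m',c} ∘ 𝟙_{n'}) ∘ 𝟙_n) ≫ μ^∘_{(m⊗m')•c, n', n} : (m • ((m' • c) ∘ n')) ∘ n ⟶ ((m ⊗ m') • c) ∘ (n' ⊘ n), is a left (N^rev × M)-actegory, where N^rev denotes the monoidal opposite of N (N with reversed tensor) and N^rev × M carries the componentwise monoidal structure. -/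

import Mathlib

open CategoryTheory Category MonoidalCategory

universe v₁ v₂ v₃ u₁ u₂ u₃

variable (M : Type u₁) [Category.{v₁} M] [MonoidalCategory M]
variable (C : Type u₂) [Category.{v₂} C]

/-- The data of a left actegory. -/
structure LeftActegoryData where
  actObj : M → C → C
  actHom : ∀ {m n : M} {c d : C}, (m ⟶ n) → (c ⟶ d) → (actObj m c ⟶ actObj n d)
  η : ∀ c : C, c ⟶ actObj (𝟙_ M) c
  η' : ∀ c : C, actObj (𝟙_ M) c ⟶ c
  μ : ∀ (m n : M) (c : C), actObj m (actObj n c) ⟶ actObj (m ⊗ n) c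
  μ' : ∀ (m n : M) (c : C), actObj (m ⊗ n) c ⟶ actObj m (actObj n c)

variable {M C}

/-- The laws of a left actegory. -/
structure IsLeftActegory (A : LeftActegoryData M C) : Prop where
  actHom_id : ∀ (m : M) (c : C), A.actHom (𝟙 m) (𝟙 c) = 𝟙 (A.actObj m c)
  actHom_comp : ∀ {m n p : M} {c d e : C} (g : m ⟶ n) (g' : n ⟶ p) (f : c ⟶ d) (f' : d ⟶ e),
      A.actHom (g ≫ g') (f ≫ f') = A.actHom g f ≫ A.actHom g' f'
  η_iso : ∀ c, A.η c ≫ A.η' c = 𝟙 c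
  η'_iso : ∀ c, A.η' c ≫ A.η c = 𝟙 _
  μ_iso : ∀ m n c, A.μ m n c ≫ A.μ' m n c = 𝟙 _
  μ'_iso : ∀ m n c, A.μ' m n c ≫ A.μ m n c = 𝟙 _
  η_nat : ∀ {c d : C} (f : c ⟶ d), f ≫ A.η d = A.η c ≫ A.actHom (𝟙 (𝟙_ M)) f
  μ_nat : ∀ {m m' n n' : M} {c c' : C} (g : m ⟶ m') (h : n ⟶ n') (f : c ⟶ c'),
      A.actHom g (A.actHom h f) ≫ A.μ m' n' c' = A.μ m n c ≫ A.actHom (g ⊗ₘ h) f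
  pentagon : ∀ (m n p : M) (c : C),
      A.μ m n (A.actObj p c) ≫ A.μ (m ⊗ n) p c ≫ A.actHom (α_ m n p).hom (𝟙 c)
        = A.actHom (𝟙 m) (A.μ n p c) ≫ A.μ m (n ⊗ p) c
  triangle_left : ∀ (m : M) (c : C),
      A.η (A.actObj m c) ≫ A.μ (𝟙_ M) m c = A.actHom (λ_ m).inv (𝟙 c)
  triangle_right : ∀ (m : M) (c : C),
      A.actHom (𝟙 m) (A.η c) ≫ A.μ m (𝟙_ M) c = A.actHom (ρ_ m).inv (𝟙 c)


variable (N : Type u₃) [Category.{v₃} N] [MonoidalCategory N]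

variable (C) in
/-- The data of a right actegory: an action `∘ : C × N ⥤ C` together with a
unitor `c ≅ c ∘ i`, a multiplicator `(c ∘ n) ∘ m ≅ c ∘ (n ⊗ m)` and their
(candidate) inverses. -/
structure RightActegoryData where
  actObj : C → N → C
  actHom : ∀ {c d : C} {n n' : N}, (c ⟶ d) → (n ⟶ n') → (actObj c n ⟶ actObj d n')
  η : ∀ c : C, c ⟶ actObj c (𝟙_ N)
  η' : ∀ c : C, actObj c (𝟙_ N) ⟶ c
  μ : ∀ (c : C) (n m : N), actObj (actObj c n) m ⟶ actObj c (n ⊗ m)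
  μ' : ∀ (c : C) (n m : N), actObj c (n ⊗ m) ⟶ actObj (actObj c n) m

variable {N}

/-- The laws of a right actegory (i.e. the coherences making it a left actegory
over the monoidal opposite). -/
structure IsRightActegory (R : RightActegoryData C N) : Prop where
  actHom_id : ∀ (c : C) (n : N), R.actHom (𝟙 c) (𝟙 n) = 𝟙 (R.actObj c n)
  actHom_comp : ∀ {c d e : C} {n p q : N} (f : c ⟶ d) (f' : d ⟶ e) (h : n ⟶ p) (h' : p ⟶ q),
      R.actHom (f ≫ f') (h ≫ h') = R.actHom f h ≫ R.actHom f' h'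
  η_iso : ∀ c, R.η c ≫ R.η' c = 𝟙 c
  η'_iso : ∀ c, R.η' c ≫ R.η c = 𝟙 _
  μ_iso : ∀ c n m, R.μ c n m ≫ R.μ' c n m = 𝟙 _
  μ'_iso : ∀ c n m, R.μ' c n m ≫ R.μ c n m = 𝟙 _
  η_nat : ∀ {c d : C} (f : c ⟶ d), f ≫ R.η d = R.η c ≫ R.actHom f (𝟙 (𝟙_ N))
  μ_nat : ∀ {c c' : C} {n n' m m' : N} (f : c ⟶ c') (h : n ⟶ n') (k : m ⟶ m'),
      R.actHom (R.actHom f h) k ≫ R.μ c' n' m' = R.μ c n m ≫ R.actHom f (h ⊗ₘ k)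
  pentagon : ∀ (c : C) (p n m : N),
      R.μ (R.actObj c p) n m ≫ R.μ c p (n ⊗ m) ≫ R.actHom (𝟙 c) (α_ p n m).inv
        = R.actHom (R.μ c p n) (𝟙 m) ≫ R.μ c (p ⊗ n) m
  triangle_left : ∀ (c : C) (m : N),
      R.η (R.actObj c m) ≫ R.μ c m (𝟙_ N) = R.actHom (𝟙 c) (ρ_ m).inv
  triangle_right : ∀ (c : C) (m : N),
      R.actHom (R.η c) (𝟙 m) ≫ R.μ c (𝟙_ N) m = R.actHom (𝟙 c) (λ_ m).inv

/-- The data of a bimodulator relating a left `M`-action and a right `N`-action on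
the same category: a natural isomorphism `ζ : m • (c ∘ n) ≅ (m • c) ∘ n`. -/
structure BimodulatorData (A : LeftActegoryData M C) (R : RightActegoryData C N) where
  ζ : ∀ (m : M) (c : C) (n : N), A.actObj m (R.actObj c n) ⟶ R.actObj (A.actObj m c) n
  ζ' : ∀ (m : M) (c : C) (n : N), R.actObj (A.actObj m c) n ⟶ A.actObj m (R.actObj c n)

/-- The laws of a biactegory: the bimodulator is a natural isomorphism satisfying
the two pentagon and the two triangle coherence laws relating it to the
structure of the two actions. -/
structure IsBiactegory {A : LeftActegoryData M C} {R : RightActegoryData C N}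
    (Z : BimodulatorData A R) : Prop where
  ζ_iso : ∀ m c n, Z.ζ m c n ≫ Z.ζ' m c n = 𝟙 _
  ζ'_iso : ∀ m c n, Z.ζ' m c n ≫ Z.ζ m c n = 𝟙 _
  ζ_nat : ∀ {m m' : M} {c c' : C} {n n' : N} (g : m ⟶ m') (f : c ⟶ c') (h : n ⟶ n'),
      A.actHom g (R.actHom f h) ≫ Z.ζ m' c' n' = Z.ζ m c n ≫ R.actHom (A.actHom g f) h
  pentagon_left : ∀ (m n : M) (c : C) (p : N),
      A.μ m n (R.actObj c p) ≫ Z.ζ (m ⊗ n) c p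
        = A.actHom (𝟙 m) (Z.ζ n c p) ≫ Z.ζ m (A.actObj n c) p ≫ R.actHom (A.μ m n c) (𝟙 p)
  pentagon_right : ∀ (p : M) (c : C) (m n : N),
      A.actHom (𝟙 p) (R.μ c m n) ≫ Z.ζ p c (m ⊗ n)
        = Z.ζ p (R.actObj c m) n ≫ R.actHom (Z.ζ p c m) (𝟙 n) ≫ R.μ (A.actObj p c) m n
  triangle_unit_left : ∀ (c : C) (m : N),
      A.η (R.actObj c m) ≫ Z.ζ (𝟙_ M) c m = R.actHom (A.η c) (𝟙 m)
  triangle_unit_right : ∀ (m : M) (c : C),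
      A.actHom (𝟙 m) (R.η c) ≫ Z.ζ m c (𝟙_ N) = R.η (A.actObj m c)


section AuxHelpers

variable {A : LeftActegoryData M C} {R : RightActegoryData C N} {Z : BimodulatorData A R}

private lemma rcomp (hR : IsRightActegory R) {c d e : C} (f : c ⟶ d) (g : d ⟶ e) (n : N) :
    R.actHom f (𝟙 n) ≫ R.actHom g (𝟙 n) = R.actHom (f ≫ g) (𝟙 n) := by
  rw [← hR.actHom_comp, comp_id]

private lemma rcomp' (hR : IsRightActegory R) {c d e : C} {n n' : N}
    (f : c ⟶ d) (g : d ⟶ e) (h : n ⟶ n') :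
    R.actHom f (𝟙 n) ≫ R.actHom g h = R.actHom (f ≫ g) h := by
  rw [← hR.actHom_comp, id_comp]

private lemma rcomp'' (hR : IsRightActegory R) {c d e : C} {n n' : N}
    (f : c ⟶ d) (g : d ⟶ e) (h : n ⟶ n') :
    R.actHom f h ≫ R.actHom g (𝟙 n') = R.actHom (f ≫ g) h := by
  rw [← hR.actHom_comp, comp_id]

private lemma rsep (hR : IsRightActegory R) {c d : C} {n n' : N} (f : c ⟶ d) (h : n ⟶ n') :
    R.actHom f h = R.actHom f (𝟙 n) ≫ R.actHom (𝟙 d) h := by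
  rw [← hR.actHom_comp, comp_id, id_comp]

private lemma rswap (hR : IsRightActegory R) {c d : C} {n n' : N} (f : c ⟶ d) (h : n ⟶ n') :
    R.actHom (𝟙 c) h ≫ R.actHom f (𝟙 n') = R.actHom f (𝟙 n) ≫ R.actHom (𝟙 d) h := by
  rw [← hR.actHom_comp, ← hR.actHom_comp, id_comp, comp_id, id_comp, comp_id]

private lemma acomp (hA : IsLeftActegory A) {c d e : C} (f : c ⟶ d) (g : d ⟶ e) (m : M) :
    A.actHom (𝟙 m) f ≫ A.actHom (𝟙 m) g = A.actHom (𝟙 m) (f ≫ g) := by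
  rw [← hA.actHom_comp, comp_id]

private lemma rmu_nat (hR : IsRightActegory R) {c d : C} (f : c ⟶ d) (n m : N) :
    R.μ c n m ≫ R.actHom f (𝟙 (n ⊗ m)) = R.actHom (R.actHom f (𝟙 n)) (𝟙 m) ≫ R.μ d n m := by
  have h := hR.μ_nat f (𝟙 n) (𝟙 m)
  rw [MonoidalCategory.id_tensorHom_id] at h
  exact h.symm

end AuxHelpers

open MonoidalOpposite

/-- Given an `(M,N)`-biactegory `(C, •, ∘, ζ)`, the functor
`((n,m), c) ↦ (m • c) ∘ n`, equipped with the unitor `η^• ≫ η^∘` and the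
multiplicator `(ζ ∘ 𝟙) ≫ ((μ^• ∘ 𝟙) ∘ 𝟙) ≫ μ^∘`, is a left `(Nᴹᵒᵖ × M)`-actegory,
where `Nᴹᵒᵖ` is the monoidal opposite of `N` and `Nᴹᵒᵖ × M` carries the
componentwise monoidal structure. -/
theorem biactegory_gives_product_actegory
    (A : LeftActegoryData M C) (hA : IsLeftActegory A)
    (R : RightActegoryData C N) (hR : IsRightActegory R)
    (Z : BimodulatorData A R) (hZ : IsBiactegory Z) :
    IsLeftActegory (M := Nᴹᵒᵖ × M) (C := C)
      { actObj := fun p c => R.actObj (A.actObj p.2 c) p.1.unmop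
        actHom := fun g f => R.actHom (A.actHom g.2 f) g.1.unmop
        η := fun c => A.η c ≫ R.η (A.actObj (𝟙_ M) c)
        η' := fun c => R.η' (A.actObj (𝟙_ M) c) ≫ A.η' c
        μ := fun p q c =>
          R.actHom (Z.ζ p.2 (A.actObj q.2 c) q.1.unmop) (𝟙 p.1.unmop)
            ≫ R.actHom (R.actHom (A.μ p.2 q.2 c) (𝟙 q.1.unmop)) (𝟙 p.1.unmop)
            ≫ R.μ (A.actObj (p.2 ⊗ q.2) c) q.1.unmop p.1.unmop
        μ' := fun p q c =>
          R.μ' (A.actObj (p.2 ⊗ q.2) c) q.1.unmop p.1.unmop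
            ≫ R.actHom (R.actHom (A.μ' p.2 q.2 c) (𝟙 q.1.unmop)) (𝟙 p.1.unmop)
            ≫ R.actHom (Z.ζ' p.2 (A.actObj q.2 c) q.1.unmop) (𝟙 p.1.unmop) } := by
  constructor
  case actHom_id =>
    intro m c
    dsimp
    rw [hA.actHom_id, hR.actHom_id]
  case actHom_comp =>
    intro m n p c d e g g' f f'
    dsimp
    rw [hA.actHom_comp, hR.actHom_comp]
  case η_iso =>
    intro c
    dsimp
    slice_lhs 2 3 => rw [hR.η_iso]
    rw [id_comp, hA.η_iso]
  case η'_iso =>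
    intro c
    dsimp
    slice_lhs 2 3 => rw [hA.η'_iso]
    rw [id_comp, hR.η'_iso]
  case μ_iso =>
    intro m n c
    dsimp
    slice_lhs 3 4 => rw [hR.μ_iso]
    simp only [id_comp, comp_id]
    slice_lhs 2 3 =>
      rw [rcomp hR]
      rw [rcomp hR]
      rw [hA.μ_iso, hR.actHom_id, hR.actHom_id]
    rw [id_comp, rcomp hR, hZ.ζ_iso, hR.actHom_id]
  case μ'_iso =>
    intro m n c
    dsimp
    slice_lhs 3 4 =>
      rw [rcomp hR, hZ.ζ'_iso, hR.actHom_id]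
    simp only [id_comp, comp_id]
    slice_lhs 2 3 =>
      rw [rcomp hR]
      rw [rcomp hR]
      rw [hA.μ'_iso, hR.actHom_id, hR.actHom_id]
    rw [id_comp, hR.μ'_iso]
  case η_nat =>
    intro c d f
    dsimp
    rw [← assoc, hA.η_nat f, assoc, hR.η_nat, assoc]
  case μ_nat =>
    intro m m' n n' c c' g h f
    dsimp
    rw [rsep hR (A.actHom g.2 (R.actHom (A.actHom h.2 f) h.1.unmop)) g.1.unmop]
    slice_lhs 2 3 => rw [rswap hR]
    slice_lhs 3 4 => rw [rswap hR]
    slice_lhs 1 2 => rw [rcomp hR, hZ.ζ_nat]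
    rw [← rcomp hR]
    slice_lhs 2 3 =>
      rw [rcomp hR]
      rw [rcomp'' hR]
      rw [hA.μ_nat]
      rw [← rcomp' hR]
      rw [← rcomp hR]
    slice_lhs 3 4 =>
      rw [rcomp' hR]
      rw [comp_id]
    slice_lhs 3 4 => rw [hR.μ_nat]
    simp only [assoc]
  case pentagon =>
    intro m n p c
    dsimp
    rw [show ((α_ m.1 n.1 p.1).prod (α_ m.2 n.2 p.2)).hom.2 = (α_ m.2 n.2 p.2).hom from rfl,
      show ((α_ m.1 n.1 p.1).prod (α_ m.2 n.2 p.2)).hom.1.unmop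
        = (α_ p.1.unmop n.1.unmop m.1.unmop).inv from rfl]
    rw [rsep hR (A.actHom (α_ m.2 n.2 p.2).hom (𝟙 c))
      (α_ p.1.unmop n.1.unmop m.1.unmop).inv]
    slice_lhs 6 7 => rw [rmu_nat hR]
    slice_lhs 3 4 => rw [rmu_nat hR]
    slice_lhs 4 5 => rw [rmu_nat hR]
    slice_lhs 5 6 => rw [rmu_nat hR]
    slice_lhs 6 8 => rw [hR.pentagon]
    simp only [← assoc]
    rw [rcomp hR _ _ m.1.unmop, rcomp hR _ _ m.1.unmop, rcomp hR _ _ m.1.unmop,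
      rcomp hR _ _ m.1.unmop, rcomp hR _ _ m.1.unmop]
    rw [rcomp hR _ _ m.1.unmop, rcomp hR _ _ m.1.unmop]
    congr 2
    simp only [assoc]
    -- now an equality in C before applying `- ∘ 𝟙 a` and the final μ∘
    slice_lhs 2 3 =>
      rw [rcomp hR _ _ n.1.unmop]
      rw [hZ.pentagon_left]
      rw [← rcomp hR _ _ n.1.unmop]
      rw [← rcomp hR _ _ n.1.unmop]
    slice_lhs 1 2 => rw [← hZ.ζ_nat]
    slice_lhs 4 5 =>
      rw [rcomp hR _ _ n.1.unmop]
      rw [rcomp hR _ _ p.1.unmop]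
    slice_lhs 4 5 =>
      rw [rcomp hR _ _ n.1.unmop]
      rw [rcomp hR _ _ p.1.unmop]
      rw [assoc]
      rw [hA.pentagon]
    slice_lhs 4 5 => rw [← rmu_nat hR]
    rw [← rcomp hR _ _ (p.1.unmop ⊗ n.1.unmop)]
    slice_lhs 2 4 => rw [← hZ.pentagon_right]
    slice_lhs 3 4 => rw [← hZ.ζ_nat]
    slice_lhs 1 2 => rw [acomp hA]
    slice_lhs 1 2 => rw [acomp hA]
    simp only [assoc]
    rw [rmu_nat hR]
  case triangle_left =>
    intro m c
    dsimp
    slice_lhs 2 3 => rw [← hR.η_nat]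
    slice_lhs 1 2 => rw [hZ.triangle_unit_left]
    slice_lhs 2 3 => rw [← hR.η_nat]
    slice_lhs 1 2 => rw [rcomp hR, hA.triangle_left]
    slice_lhs 2 3 => rw [hR.triangle_left]
    rw [← rsep hR]
    rfl
  case triangle_right =>
    intro m c
    dsimp
    slice_lhs 1 2 =>
      rw [rcomp hR]
      rw [← acomp hA, assoc, hZ.triangle_unit_right]
    slice_lhs 1 2 =>
      rw [rcomp hR]
      rw [assoc, ← hR.η_nat, ← assoc, hA.triangle_right]
    rw [← rcomp hR, assoc]
    slice_lhs 2 3 => rw [hR.triangle_right]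
    rw [← rsep hR]
    rfl
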